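/- Let q = p^n ≡ 3 (mod 4) and u ∈ F_q* with χ(u+1) = χ(1-u) = ±1 and u ∉ {1,-1} (i.e., χ(u+1) ≠ χ(u-1), u ≠ 0). Let a, b ∈ F_q* satisfy χ(a²b² - 4ab + 4u²) = 1, and let s denote either square root of a²b² - 4ab + 4u². Then χ(2u² - ab + us) = -1 and χ(2u² - ab - us) = -1 hold simultaneously if and only if χ(2ab(1 + √(1-u²)) - 4u²) = 1, where √(1-u²) is a fixed square root of the square element 1 - u². -/

import Mathlib

open Finset
open scoped Classical

/-- The quadratic character of a finite field, valued in ℤ. -/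
noncomputable def qchar {F : Type*} [Field F] (x : F) : ℤ :=
  if x = 0 then 0 else if IsSquare x then 1 else -1

lemma qchar_mul {F : Type*} [Field F] [Fintype F] (x y : F) :
    qchar (x * y) = qchar x * qchar y := by
  classical
  have h : ∀ z : F, qchar z = quadraticChar F z := by
    intro z
    simp only [qchar, quadraticChar_apply, quadraticCharFun]
    split_ifs <;> rfl
  rw [h, h, h, map_mul]

lemma qchar_sq {F : Type*} [Field F] [Fintype F] {x : F} (hx : x ≠ 0) :
    qchar (x ^ 2) = 1 := by
  unfold qchar
  rw [if_neg (pow_ne_zero 2 hx), if_pos ⟨x, pow_two x⟩]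

lemma qchar_neg_one {F : Type*} [Field F] [Fintype F] (hq : Fintype.card F % 4 = 3) :
    qchar (-1 : F) = -1 := by
  have h : ¬ IsSquare (-1 : F) := by
    rw [FiniteField.isSquare_neg_one_iff]
    simp [hq]
  simp [qchar, h]

lemma qchar_pm {F : Type*} [Field F] {x : F} (hx : x ≠ 0) :
    qchar x = 1 ∨ qchar x = -1 := by
  unfold qchar
  rw [if_neg hx]
  split_ifs <;> simp

theorem stmt_13 {F : Type*} [Field F] [Fintype F]
    (hq : Fintype.card F % 4 = 3) (u : F) (hu0 : u ≠ 0)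
    (hu : qchar (u + 1) = qchar (1 - u)) (hune : qchar (u + 1) ≠ 0)
    (hu1 : u ≠ 1) (hum1 : u ≠ -1)
    (a b : F) (ha : a ≠ 0) (hb : b ≠ 0)
    (s : F) (hs : s ^ 2 = a ^ 2 * b ^ 2 - 4 * a * b + 4 * u ^ 2)
    (hsq : qchar (a ^ 2 * b ^ 2 - 4 * a * b + 4 * u ^ 2) = 1)
    (v : F) (hv : v ^ 2 = 1 - u ^ 2) :
    (qchar (2 * u ^ 2 - a * b + u * s) = -1 ∧ qchar (2 * u ^ 2 - a * b - u * s) = -1) ↔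
      qchar (2 * a * b * (1 + v) - 4 * u ^ 2) = 1 := by
  classical
  set A := 2 * u ^ 2 - a * b + u * s with hA
  set B := 2 * u ^ 2 - a * b - u * s with hBdef
  set C := 2 * a * b * (1 + v) - 4 * u ^ 2 with hCdef
  -- v ≠ 0
  have hv0 : v ≠ 0 := by
    intro h
    have h0 : (1 - u) * (1 + u) = 0 := by
      rw [h] at hv
      linear_combination -hv
    rcases mul_eq_zero.mp h0 with h1 | h1
    · exact hu1 (sub_eq_zero.mp h1).symm
    · exact hum1 (by linear_combination h1)
  -- s ≠ 0
  have hexpr : a ^ 2 * b ^ 2 - 4 * a * b + 4 * u ^ 2 ≠ 0 := by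
    intro h
    rw [h] at hsq
    simp [qchar] at hsq
  have hs0 : s ≠ 0 := by
    intro h
    apply hexpr
    rw [← hs, h]
    ring
  -- 2 ≠ 0
  have h2 : (2 : F) ≠ 0 := by
    intro h
    have hm : (-1 : F) = 1 := by linear_combination -h
    have hsqm : IsSquare (-1 : F) := by rw [hm]; exact IsSquare.one
    rw [FiniteField.isSquare_neg_one_iff] at hsqm
    exact hsqm hq
  -- key identities
  have I1 : A * B = (a * b * v) ^ 2 := by
    rw [hA, hBdef]
    linear_combination (-(u ^ 2)) * hs + (-(a ^ 2 * b ^ 2)) * hv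
  have I2 : (a * b * (1 + v) - 2 * u ^ 2 - u * s) ^ 2 = -(A * C) := by
    rw [hA, hCdef]
    linear_combination u ^ 2 * hs + a ^ 2 * b ^ 2 * hv
  have habv : a * b * v ≠ 0 := mul_ne_zero (mul_ne_zero ha hb) hv0
  have hAB : A * B ≠ 0 := by rw [I1]; exact pow_ne_zero 2 habv
  have hA0 : A ≠ 0 := left_ne_zero_of_mul hAB
  have hB0 : B ≠ 0 := right_ne_zero_of_mul hAB
  have hC0 : C ≠ 0 := by
    intro h
    have hz : (a * b * (1 + v) - 2 * u ^ 2 - u * s) ^ 2 = 0 := by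
      rw [I2, h, mul_zero, neg_zero]
    have hz' : a * b * (1 + v) - 2 * u ^ 2 - u * s = 0 :=
      (pow_eq_zero_iff (by norm_num : (2 : ℕ) ≠ 0)).mp hz
    have hus : u * s = 0 := by
      have h2us : (2 : F) * (u * s) = 0 := by
        rw [hCdef] at h
        linear_combination h - 2 * hz'
      rcases mul_eq_zero.mp h2us with h' | h'
      · exact absurd h' h2
      · exact h'
    rcases mul_eq_zero.mp hus with h' | h'
    · exact hu0 h'
    · exact hs0 h'
  have hDus : a * b * (1 + v) - 2 * u ^ 2 - u * s ≠ 0 := by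
    intro h
    have : -(A * C) = 0 := by rw [← I2, h]; ring
    exact mul_ne_zero hA0 hC0 (by simpa using this)
  -- character equations
  have e1 : qchar A * qchar B = 1 := by
    rw [← qchar_mul, I1]
    exact qchar_sq habv
  have e2 : qchar A * qchar C = -1 := by
    have h1 : qchar (-(A * C)) = 1 := by rw [← I2]; exact qchar_sq hDus
    rw [show -(A * C) = (-1 : F) * (A * C) by ring, qchar_mul, qchar_mul,
      qchar_neg_one hq] at h1
    linarith
  constructor
  · rintro ⟨h1, _⟩
    rcases qchar_pm hC0 with h | h
    · exact h
    · rw [h1, h] at e2; norm_num at e2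
  · intro h
    have hA' : qchar A = -1 := by
      rcases qchar_pm hA0 with h' | h'
      · rw [h', h] at e2; norm_num at e2
      · exact h'
    refine ⟨hA', ?_⟩
    rw [hA'] at e1
    linarith
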